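/- arXiv:1709.00750 — 2 statements merged into one kernel-verified Lean document; each statement's English description precedes it below -/
import Mathlib

section
/- For |q| < 1 and z ≠ 0, the series ∑_{k∈ℤ} (-1)^k z^k q^{k(k-1)/2} equals the infinite product (1-z)∏_{i=1}^∞ (1-q^i)(1-q^i z)(1-q^i z^{-1}) (Jacobi triple product in this form). -/
open Finset Filter Topology

noncomputable def jtpD (q : ℂ) (n : ℕ) : ℂ := ∏ j ∈ Finset.range n, (1 - q ^ (j + 1))

noncomputable def jtpG (q : ℂ) (n k : ℕ) : ℂ :=
  (∏ i ∈ Finset.range k, (1 - q ^ (n - i))) / jtpD q k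

noncomputable def jtpSq (q : ℂ) : ℝ := ∑' j : ℕ, ‖q‖ ^ (j + 1)

lemma jtp_factor_ne (q : ℂ) (hq : ‖q‖ < 1) (j : ℕ) : (1 : ℂ) - q ^ (j + 1) ≠ 0 := by
  intro h
  have h1 : q ^ (j + 1) = 1 := by linear_combination -h
  have : ‖q ^ (j + 1)‖ < 1 := by
    rw [norm_pow]
    exact pow_lt_one₀ (norm_nonneg q) hq (Nat.succ_ne_zero j)
  rw [h1, norm_one] at this
  exact lt_irrefl 1 this

lemma jtpD_ne_zero (q : ℂ) (hq : ‖q‖ < 1) (n : ℕ) : jtpD q n ≠ 0 :=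
  Finset.prod_ne_zero_iff.2 fun j _ => jtp_factor_ne q hq j

lemma jtpD_succ (q : ℂ) (n : ℕ) : jtpD q (n + 1) = jtpD q n * (1 - q ^ (n + 1)) :=
  Finset.prod_range_succ _ _

lemma jtpG_zero (q : ℂ) (n : ℕ) : jtpG q n 0 = 1 := by simp [jtpG, jtpD]

lemma jtpG_top (q : ℂ) (n : ℕ) : jtpG q n (n + 1) = 0 := by
  unfold jtpG
  rw [Finset.prod_eq_zero (Finset.self_mem_range_succ n)]
  · simp
  · simp

lemma jtp_pascal (q : ℂ) (hq : ‖q‖ < 1) {n k : ℕ} (hk : k ≤ n) :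
    jtpG q (n + 1) (k + 1) = jtpG q n (k + 1) + q ^ (n - k) * jtpG q n k := by
  have hD : jtpD q k ≠ 0 := jtpD_ne_zero q hq k
  have hf : (1 : ℂ) - q ^ (k + 1) ≠ 0 := jtp_factor_ne q hq k
  have h1 : (∏ i ∈ Finset.range (k + 1), (1 - q ^ (n + 1 - i)))
      = (1 - q ^ (n + 1)) * ∏ i ∈ Finset.range k, (1 - q ^ (n - i)) := by
    rw [Finset.prod_range_succ']
    have : ∀ i ∈ Finset.range k, (1 - q ^ (n + 1 - (i + 1))) = (1 - q ^ (n - i)) := by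
      intro i _; congr 2; omega
    rw [Finset.prod_congr rfl this]
    rw [Nat.sub_zero]
    ring
  have h2 : (∏ i ∈ Finset.range (k + 1), (1 - q ^ (n - i)))
      = (∏ i ∈ Finset.range k, (1 - q ^ (n - i))) * (1 - q ^ (n - k)) :=
    Finset.prod_range_succ _ _
  have hqq : q ^ (n - k) * q ^ (k + 1) = q ^ (n + 1) := by
    rw [← pow_add]; congr 1; omega
  unfold jtpG
  rw [h1, h2, jtpD_succ]
  field_simp
  ring_nf
  linear_combination (∏ i ∈ Finset.range k, (1 - q ^ (n - i))) * hqq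

lemma jtp_tri (k : ℕ) : (k + 1) * k / 2 = k * (k - 1) / 2 + k := by
  rcases k with _ | j
  · simp
  · obtain ⟨m, hm⟩ : Even (j * (j + 1)) := Nat.even_mul_succ_self j
    have h1 : (j + 1 + 1) * (j + 1) = j * (j + 1) + 2 * (j + 1) := by ring
    have h2 : (j + 1) * (j + 1 - 1) = j * (j + 1) := by
      rw [Nat.add_sub_cancel]; ring
    rw [h1, h2, hm]
    omega

theorem jtp_gauss (q : ℂ) (hq : ‖q‖ < 1) (x : ℂ) (n : ℕ) :
    ∏ i ∈ Finset.range n, (1 + x * q ^ i)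
      = ∑ k ∈ Finset.range (n + 1), q ^ (k * (k - 1) / 2) * jtpG q n k * x ^ k := by
  induction n with
  | zero => simp [jtpG_zero]
  | succ n ih =>
    have key : ∀ k ∈ Finset.range (n + 1),
        q ^ ((k + 1) * (k + 1 - 1) / 2) * jtpG q (n + 1) (k + 1) * x ^ (k + 1)
          = q ^ ((k + 1) * (k + 1 - 1) / 2) * jtpG q n (k + 1) * x ^ (k + 1)
            + (q ^ (k * (k - 1) / 2) * jtpG q n k * x ^ k) * (x * q ^ n) := by
      intro k hk
      have hkn : k ≤ n := by simpa [Nat.lt_succ_iff] using hk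
      simp only [Nat.add_sub_cancel]
      rw [jtp_pascal q hq hkn]
      have hpow : q ^ ((k + 1) * k / 2) * q ^ (n - k) = q ^ (k * (k - 1) / 2) * q ^ n := by
        rw [← pow_add, ← pow_add]
        congr 1
        have := jtp_tri k
        omega
      calc q ^ ((k+1)*k/2) * (jtpG q n (k+1) + q ^ (n-k) * jtpG q n k) * x ^ (k+1)
          = q ^ ((k+1)*k/2) * jtpG q n (k+1) * x ^ (k+1)
            + (q ^ ((k+1)*k/2) * q ^ (n-k)) * jtpG q n k * (x ^ k * x) := by ring
        _ = _ := by rw [hpow]; ring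
    rw [Finset.prod_range_succ, ih, Finset.sum_range_succ' _ (n + 1),
      Finset.sum_congr rfl key, Finset.sum_add_distrib]
    have h0 : q ^ (0 * (0 - 1) / 2) * jtpG q (n + 1) 0 * x ^ 0 = 1 := by simp [jtpG_zero]
    have h1 : (∑ k ∈ Finset.range (n + 1),
        q ^ ((k + 1) * (k + 1 - 1) / 2) * jtpG q n (k + 1) * x ^ (k + 1)) + 1
        = ∑ k ∈ Finset.range (n + 2), q ^ (k * (k - 1) / 2) * jtpG q n k * x ^ k := by
      rw [Finset.sum_range_succ' (fun k => q ^ (k * (k - 1) / 2) * jtpG q n k * x ^ k) (n + 1)]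
      simp [jtpG_zero]
    have h2 : ∑ k ∈ Finset.range (n + 2), q ^ (k * (k - 1) / 2) * jtpG q n k * x ^ k
        = ∑ k ∈ Finset.range (n + 1), q ^ (k * (k - 1) / 2) * jtpG q n k * x ^ k := by
      rw [Finset.sum_range_succ, jtpG_top]
      ring
    rw [h0, ← Finset.sum_mul]
    have := h1
    rw [h2] at this
    linear_combination - this

lemma zpow_prod_sum (q : ℂ) (hq0 : q ≠ 0) (M : ℕ) (e : ℕ → ℤ) :
    ∏ i ∈ Finset.range M, q ^ (e i) = q ^ (∑ i ∈ Finset.range M, e i) := by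
  induction M with
  | zero => simp
  | succ n ih => rw [Finset.prod_range_succ, Finset.sum_range_succ, ih, zpow_add₀ hq0]

lemma jtp_sumT (M : ℕ) : (∑ j ∈ Finset.range M, (-(j:ℤ)-1)) * 2 = -(M*(M+1)) := by
  induction M with
  | zero => simp
  | succ n ih =>
    rw [Finset.sum_range_succ, add_mul, ih]
    push_cast
    ring

lemma jtp_evenk (k : ℕ) : ((k*(k-1)/2 : ℕ) : ℤ) * 2 = (k:ℤ)*((k:ℤ)-1) := by
  rcases k with _ | j
  · simp
  · have h2 : (j+1) * (j+1-1) = j*(j+1) := by rw [Nat.add_sub_cancel]; ring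
    rw [h2]
    have he : Even (j*(j+1)) := Nat.even_mul_succ_self j
    have : j*(j+1)/2*2 = j*(j+1) := Nat.div_mul_cancel he.two_dvd
    have := congrArg (fun t : ℕ => (t : ℤ)) this
    push_cast at this ⊢
    rw [this]
    ring

lemma jtp_evenm (m : ℤ) : (m*(m-1)/2) * 2 = m*(m-1) := by
  have he : Even ((m-1)*(m-1+1)) := Int.even_mul_succ_self (m-1)
  rw [sub_add_cancel, mul_comm] at he
  exact Int.ediv_mul_cancel he.two_dvd

lemma jtp_exp (M k : ℕ) (T : ℤ) (hT : T * 2 = -(M*(M+1))) :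
    ((k*(k-1)/2 : ℕ) : ℤ) - T - M*k = ((k:ℤ)-M) * ((k:ℤ)-M-1) / 2 := by
  have e1 := jtp_evenk k
  have e2 := jtp_evenm ((k:ℤ)-M)
  have h : (((k*(k-1)/2 : ℕ) : ℤ) - T - M*k) * 2 = (((k:ℤ)-M) * ((k:ℤ)-M-1) / 2) * 2 := by
    linear_combination e1 - hT - e2
  exact mul_right_cancel₀ two_ne_zero h

theorem jtp_finite (q z : ℂ) (hq : ‖q‖ < 1) (hq0 : q ≠ 0) (hz : z ≠ 0) (M : ℕ) :
    (1 - z) * (∏ i ∈ Finset.range (M+1), (1 - q^(i+1) * z))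
        * (∏ j ∈ Finset.range M, (1 - q^(j+1) * z⁻¹))
      = ∑ k ∈ Finset.range (2*M+3),
          (-z) ^ ((k:ℤ) - M) * q ^ ((((k:ℤ)-M) * ((k:ℤ)-M-1)) / 2) * jtpG q (2*M+2) k := by
  have hz' : -z ≠ 0 := neg_ne_zero.2 hz
  set x : ℂ := -(z * q ^ (-(M:ℤ))) with hxdef
  have hfac : ∀ i : ℕ, 1 + x * q ^ i = 1 - z * q ^ ((i:ℤ) - M) := by
    intro i
    have h : q ^ (-(M:ℤ)) * q ^ (i:ℕ) = q ^ ((i:ℤ) - M) := by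
      rw [← zpow_natCast q i, ← zpow_add₀ hq0]
      congr 1
      ring
    calc 1 + x * q ^ i = 1 - z * (q ^ (-(M:ℤ)) * q ^ (i:ℕ)) := by rw [hxdef]; ring
      _ = 1 - z * q ^ ((i:ℤ) - M) := by rw [h]
  -- left side computation
  have hsplit : ∏ i ∈ Finset.range (2*M+2), (1 + x * q ^ i)
      = (∏ i ∈ Finset.range M, (1 + x * q ^ i)) *
        ∏ i ∈ Finset.range (M+2), (1 + x * q ^ (M + i)) := by
    rw [show 2*M+2 = M + (M+2) by ring, Finset.prod_range_add]
  -- second block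
  have hB2 : ∏ i ∈ Finset.range (M+2), (1 + x * q ^ (M + i))
      = (1 - z) * ∏ i ∈ Finset.range (M+1), (1 - q^(i+1) * z) := by
    have h1 : ∀ i ∈ Finset.range (M+2), 1 + x * q ^ (M + i) = 1 - q ^ i * z := by
      intro i _
      rw [hfac (M + i)]
      have : ((M + i : ℕ) : ℤ) - M = (i : ℕ) := by push_cast; ring
      rw [this, zpow_natCast]
      ring
    rw [Finset.prod_congr rfl h1, Finset.prod_range_succ']
    simp only [pow_zero, one_mul]
    ring
  -- first block
  have hB1 : ∏ i ∈ Finset.range M, (1 + x * q ^ i)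
      = ((-z) ^ (M:ℕ) * q ^ (∑ j ∈ Finset.range M, (-(j:ℤ)-1))) *
        ∏ j ∈ Finset.range M, (1 - q^(j+1) * z⁻¹) := by
    rw [← Finset.prod_range_reflect]
    have h1 : ∀ j ∈ Finset.range M, 1 + x * q ^ (M - 1 - j)
        = (-z * q ^ (-(j:ℤ)-1)) * (1 - q^(j+1) * z⁻¹) := by
      intro j hj
      have hjM : j < M := Finset.mem_range.1 hj
      rw [hfac (M - 1 - j)]
      have he : ((M - 1 - j : ℕ) : ℤ) - M = -(j:ℤ)-1 := by omega
      rw [he]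
      have hq1 : q ^ (-(j:ℤ)-1) * q ^ ((j:ℕ)+1) = 1 := by
        rw [← zpow_natCast q (j+1), ← zpow_add₀ hq0]
        norm_num
      have h2 : (-z * q ^ (-(j:ℤ)-1)) * (1 - q^(j+1) * z⁻¹)
          = -(z * q ^ (-(j:ℤ)-1)) + (q ^ (-(j:ℤ)-1) * q ^ ((j:ℕ)+1)) * (z * z⁻¹) := by
        push_cast; ring
      rw [h2, hq1, mul_inv_cancel₀ hz]
      ring
    rw [Finset.prod_congr rfl h1, Finset.prod_mul_distrib, Finset.prod_mul_distrib,
      Finset.prod_const, Finset.card_range, zpow_prod_sum q hq0]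
  -- assemble Gauss
  have gauss := jtp_gauss q hq x (2*M+2)
  rw [hsplit, hB1, hB2] at gauss
  set T : ℤ := ∑ j ∈ Finset.range M, (-(j:ℤ)-1) with hTdef
  have hT2 := jtp_sumT M
  rw [← hTdef] at hT2
  -- multiply both sides by (-z)^(-M) * q^(-T)
  have key : (1 - z) * (∏ i ∈ Finset.range (M+1), (1 - q^(i+1) * z))
        * (∏ j ∈ Finset.range M, (1 - q^(j+1) * z⁻¹))
      = ((-z) ^ (-(M:ℤ)) * q ^ (-T)) *
        ∑ k ∈ Finset.range (2*M+3), q ^ (k * (k - 1) / 2) * jtpG q (2*M+2) k * x ^ k := by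
    rw [show (2*M+3) = (2*M+2)+1 by ring, ← gauss]
    have hzz : (-z) ^ (-(M:ℤ)) * (-z) ^ (M:ℕ) = 1 := by
      rw [← zpow_natCast (-z) M, ← zpow_add₀ hz']
      norm_num
    have hqq : q ^ (-T) * q ^ T = 1 := by
      rw [← zpow_add₀ hq0]; norm_num
    calc (1 - z) * (∏ i ∈ Finset.range (M+1), (1 - q^(i+1) * z))
          * (∏ j ∈ Finset.range M, (1 - q^(j+1) * z⁻¹))
        = ((-z) ^ (-(M:ℤ)) * (-z) ^ (M:ℕ)) * (q ^ (-T) * q ^ T) *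
            ((1 - z) * (∏ i ∈ Finset.range (M+1), (1 - q^(i+1) * z))
              * (∏ j ∈ Finset.range M, (1 - q^(j+1) * z⁻¹))) := by rw [hzz, hqq]; ring
      _ = _ := by ring
  rw [key, Finset.mul_sum]
  apply Finset.sum_congr rfl
  intro k hk
  -- termwise
  have hxk : x ^ k = (-z) ^ (k:ℕ) * q ^ (-(M:ℤ) * k) := by
    rw [hxdef, show -(z * q ^ (-(M:ℤ))) = (-z) * q ^ (-(M:ℤ)) by ring, mul_pow,
      ← zpow_natCast (q ^ (-(M:ℤ))) k, ← zpow_mul]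
  rw [hxk]
  have hzc : (-z) ^ (-(M:ℤ)) * (-z) ^ (k:ℕ) = (-z) ^ ((k:ℤ) - M) := by
    rw [← zpow_natCast (-z) k, ← zpow_add₀ hz']
    congr 1
    ring
  have hqc : q ^ (-T) * (q ^ (k * (k - 1) / 2 : ℕ) * q ^ (-(M:ℤ) * k))
      = q ^ ((((k:ℤ)-M) * ((k:ℤ)-M-1)) / 2) := by
    rw [← zpow_natCast q (k * (k - 1) / 2), ← zpow_add₀ hq0, ← zpow_add₀ hq0]
    rw [← jtp_exp M k T hT2]
    congr 1
    ring
  calc (-z) ^ (-(M:ℤ)) * q ^ (-T) *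
        (q ^ (k * (k - 1) / 2 : ℕ) * jtpG q (2*M+2) k * ((-z) ^ (k:ℕ) * q ^ (-(M:ℤ) * k)))
      = ((-z) ^ (-(M:ℤ)) * (-z) ^ (k:ℕ)) *
        (q ^ (-T) * (q ^ (k * (k - 1) / 2 : ℕ) * q ^ (-(M:ℤ) * k))) * jtpG q (2*M+2) k := by
        ring
    _ = _ := by rw [hzc, hqc]

lemma jtp_summable_nat (c r : ℝ) (hc : 0 < c) (hr0 : 0 < r) (hr : r < 1) (d : ℕ → ℕ)
    (hd : ∀ n : ℕ, ∃ t : ℕ, n ≤ t ∧ d (n + 1) = d n + t) :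
    Summable (fun n : ℕ => c ^ n * r ^ (d n)) := by
  apply summable_of_ratio_norm_eventually_le hr
  have hlim : Tendsto (fun n : ℕ => c * r ^ n) atTop (𝓝 0) := by
    simpa using (tendsto_pow_atTop_nhds_zero_of_lt_one hr0.le hr).const_mul c
  filter_upwards [hlim.eventually_le_const hr0] with n h
  obtain ⟨t, ht, hdt⟩ := hd n
  have h1 : c ^ (n+1) * r ^ (d (n+1)) = (c * r ^ t) * (c ^ n * r ^ (d n)) := by
    rw [hdt, pow_add, pow_succ]
    ring
  have hpos : 0 ≤ c ^ n * r ^ (d n) := by positivity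
  have h2 : c * r ^ t ≤ c * r ^ n :=
    mul_le_mul_of_nonneg_left (pow_le_pow_of_le_one hr0.le hr.le ht) hc.le
  rw [Real.norm_eq_abs, Real.norm_eq_abs, abs_of_nonneg (by positivity),
    abs_of_nonneg hpos, h1]
  calc (c * r ^ t) * (c ^ n * r ^ (d n)) ≤ (c * r ^ n) * (c ^ n * r ^ (d n)) :=
        mul_le_mul_of_nonneg_right h2 hpos
    _ ≤ r * (c ^ n * r ^ (d n)) := mul_le_mul_of_nonneg_right h hpos

lemma jtp_summable_int (c r : ℝ) (hc : 0 < c) (hr0 : 0 < r) (hr : r < 1) :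
    Summable (fun m : ℤ => c ^ m * r ^ (m * (m - 1) / 2)) := by
  apply Summable.of_nat_of_neg
  · have key : ∀ n : ℕ, c ^ (n:ℤ) * r ^ ((n:ℤ) * ((n:ℤ) - 1) / 2)
        = c ^ n * r ^ (n * (n-1) / 2 : ℕ) := by
      intro n
      have h : ((n:ℤ) * ((n:ℤ) - 1) / 2) = ((n * (n-1) / 2 : ℕ) : ℤ) := by
        have a := jtp_evenk n
        have b := jtp_evenm (n : ℤ)
        omega
      rw [h, zpow_natCast, zpow_natCast]
    rw [funext key]
    exact jtp_summable_nat c r hc hr0 hr _ (fun n => ⟨n, le_rfl, by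
      have h := jtp_tri n
      have c1 : (n+1)*((n+1)-1) = (n+1)*n := by simp
      omega⟩)
  · have key : ∀ n : ℕ, c ^ (-(n:ℤ)) * r ^ ((-(n:ℤ)) * ((-(n:ℤ)) - 1) / 2)
        = (c⁻¹) ^ n * r ^ (n * (n+1) / 2 : ℕ) := by
      intro n
      have h : ((-(n:ℤ)) * ((-(n:ℤ)) - 1) / 2) = ((n * (n+1) / 2 : ℕ) : ℤ) := by
        have b := jtp_evenm (-(n:ℤ))
        have a := jtp_evenk (n+1)
        have hQ2 : (-(n:ℤ))*(-(n:ℤ)-1) = (((n+1:ℕ)):ℤ)*((((n+1:ℕ)):ℤ)-1) := by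
          push_cast; ring
        have hc2 : n*(n+1)/2 = (n+1)*((n+1)-1)/2 := by
          congr 1
          simp [Nat.mul_comm]
        omega
      rw [h, zpow_neg, ← inv_zpow, zpow_natCast, zpow_natCast]
    rw [funext key]
    exact jtp_summable_nat c⁻¹ r (by positivity) hr0 hr _ (fun n => ⟨n+1, by omega, by
      have h := jtp_tri (n+1)
      have c1 : (n+1)*(n+1+1) = (n+1+1)*(n+1) := by ring
      have c2 : n*(n+1) = (n+1)*n := by ring
      have c3 : (n+1)*((n+1)-1) = (n+1)*n := by simp
      omega⟩)

lemma jtp_log_summable (q w : ℂ) (hq : ‖q‖ < 1) :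
    Summable (fun i : ℕ => Complex.log (1 - q ^ (i+1) * w)) := by
  apply Summable.of_norm_bounded_eventually_nat (g := fun i => 3/2 * (‖w‖ * ‖q‖ ^ (i+1)))
  · apply Summable.mul_left
    apply Summable.mul_left
    exact (summable_geometric_of_lt_one (norm_nonneg q) hq).comp_injective
      (add_left_injective 1) |>.congr (fun i => rfl)
  · have hlim : Tendsto (fun i : ℕ => ‖q ^ (i+1) * w‖) atTop (𝓝 0) := by
      have : Tendsto (fun i : ℕ => ‖q‖ ^ (i+1) * ‖w‖) atTop (𝓝 (0 * ‖w‖)) := by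
        apply Tendsto.mul_const
        exact (tendsto_pow_atTop_nhds_zero_of_lt_one (norm_nonneg q) hq).comp
          (tendsto_add_atTop_nat 1)
      simpa [norm_mul, norm_pow] using this
    filter_upwards [hlim.eventually_le_const (by norm_num : (0:ℝ) < 1/2)] with i hi
    have h1 : ‖-(q ^ (i+1) * w)‖ ≤ 1/2 := by rwa [norm_neg]
    have := Complex.norm_log_one_add_half_le_self h1
    rw [show (1 : ℂ) + -(q ^ (i+1) * w) = 1 - q ^ (i+1) * w by ring] at this
    calc ‖Complex.log (1 - q ^ (i+1) * w)‖ ≤ 3/2 * ‖-(q ^ (i+1) * w)‖ := this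
      _ = 3/2 * (‖w‖ * ‖q‖ ^ (i+1)) := by
        rw [norm_neg, norm_mul, norm_pow]; ring

lemma jtp_hasProd (q w : ℂ) (hq : ‖q‖ < 1) :
    HasProd (fun i : ℕ => 1 - q ^ (i+1) * w) (∏' i : ℕ, (1 - q ^ (i+1) * w)) := by
  by_cases h0 : ∀ i : ℕ, 1 - q ^ (i+1) * w ≠ 0
  · have h := (jtp_log_summable q w hq).hasSum.cexp
    have hf : (Complex.exp ∘ fun i : ℕ => Complex.log (1 - q ^ (i+1) * w))
        = fun i : ℕ => 1 - q ^ (i+1) * w := funext fun i => Complex.exp_log (h0 i)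
    rw [hf] at h
    exact h.multipliable.hasProd
  · push_neg at h0
    obtain ⟨i0, hi0⟩ := h0
    have hzero : HasProd (fun i : ℕ => 1 - q ^ (i+1) * w) 0 := by
      have hev : ∀ᶠ s : Finset ℕ in atTop, (∏ i ∈ s, (1 - q ^ (i+1) * w)) = 0 := by
        filter_upwards [eventually_ge_atTop {i0}] with s hs
        exact Finset.prod_eq_zero (hs (Finset.mem_singleton_self i0)) hi0
      exact Tendsto.congr' (by filter_upwards [hev] with s hs; exact hs.symm)
        tendsto_const_nhds
    exact hzero.multipliable.hasProd

lemma jtpSq_summable (q : ℂ) (hq : ‖q‖ < 1) : Summable (fun j : ℕ => ‖q‖ ^ (j + 1)) :=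
  (summable_geometric_of_lt_one (norm_nonneg q) hq).comp_injective (add_left_injective 1)

lemma jtp_exp_le (q : ℂ) (hq : ‖q‖ < 1) {t : ℝ} (h0 : 0 ≤ t) (h1 : t ≤ ‖q‖) :
    Real.exp (-((1 - ‖q‖)⁻¹ * t)) ≤ 1 - t := by
  set c : ℝ := (1 - ‖q‖)⁻¹ with hc
  have hq1 : 0 < 1 - ‖q‖ := by linarith
  have hcpos : 0 < c := inv_pos.2 hq1
  have hct : 0 < 1 + c * t := by positivity
  have h2 : 1 + c * t ≤ Real.exp (c * t) := by linarith [Real.add_one_le_exp (c * t)]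
  have h3 : Real.exp (-(c * t)) ≤ (1 + c * t)⁻¹ := by
    rw [Real.exp_neg]
    exact inv_anti₀ hct h2
  refine h3.trans ?_
  have hcq : c * (1 - ‖q‖) = 1 := inv_mul_cancel₀ hq1.ne'
  have key : 1 ≤ (1 - t) * (1 + c * t) := by nlinarith [mul_nonneg hcpos.le h0, mul_nonneg h0 h0]
  calc (1 + c * t)⁻¹ = (1 + c * t)⁻¹ * 1 := by ring
    _ ≤ (1 + c * t)⁻¹ * ((1 - t) * (1 + c * t)) :=
        mul_le_mul_of_nonneg_left key (inv_nonneg.2 hct.le)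
    _ = 1 - t := by field_simp

lemma jtpD_lower (q : ℂ) (hq : ‖q‖ < 1) (k : ℕ) :
    Real.exp (-((1 - ‖q‖)⁻¹ * jtpSq q)) ≤ ‖jtpD q k‖ := by
  have hSq := jtpSq_summable q hq
  have hqj : ∀ j : ℕ, ‖q‖ ^ (j+1) ≤ ‖q‖ := fun j =>
    pow_le_of_le_one (norm_nonneg q) hq.le (Nat.succ_ne_zero j)
  have step1 : ∀ j : ℕ, Real.exp (-((1 - ‖q‖)⁻¹ * ‖q‖ ^ (j+1))) ≤ ‖1 - q ^ (j+1)‖ := by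
    intro j
    refine (jtp_exp_le q hq (by positivity) (hqj j)).trans ?_
    have := norm_sub_norm_le (1 : ℂ) (q ^ (j+1))
    rw [norm_one, norm_pow] at this
    exact this
  have h2 : ∑ j ∈ Finset.range k, ((1 - ‖q‖)⁻¹ * ‖q‖ ^ (j+1)) ≤ (1 - ‖q‖)⁻¹ * jtpSq q := by
    rw [← Finset.mul_sum]
    apply mul_le_mul_of_nonneg_left _ (inv_nonneg.2 (by linarith : (0:ℝ) ≤ 1 - ‖q‖))
    exact Summable.sum_le_tsum (Finset.range k) (fun j _ => by positivity) hSq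
  calc Real.exp (-((1 - ‖q‖)⁻¹ * jtpSq q))
      ≤ Real.exp (-(∑ j ∈ Finset.range k, ((1 - ‖q‖)⁻¹ * ‖q‖ ^ (j+1)))) := by
        apply Real.exp_le_exp.2
        linarith
    _ = ∏ j ∈ Finset.range k, Real.exp (-((1 - ‖q‖)⁻¹ * ‖q‖ ^ (j+1))) := by
        rw [← Real.exp_sum, ← Finset.sum_neg_distrib]
    _ ≤ ∏ j ∈ Finset.range k, ‖1 - q ^ (j+1)‖ :=
        Finset.prod_le_prod (fun j _ => (Real.exp_pos _).le) (fun j _ => step1 j)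
    _ = ‖jtpD q k‖ := by rw [jtpD, norm_prod]

lemma jtp_num_upper (q : ℂ) (hq : ‖q‖ < 1) {n k : ℕ} (hkn : k ≤ n) :
    ‖∏ i ∈ Finset.range k, (1 - q ^ (n - i))‖ ≤ Real.exp (jtpSq q) := by
  have hSq := jtpSq_summable q hq
  have step1 : ∀ i : ℕ, ‖1 - q ^ (n - i)‖ ≤ Real.exp (‖q‖ ^ (n - i)) := by
    intro i
    have h1 : ‖(1 : ℂ) - q ^ (n-i)‖ ≤ 1 + ‖q‖ ^ (n-i) := by
      calc ‖(1:ℂ) - q ^ (n-i)‖ ≤ ‖(1:ℂ)‖ + ‖q ^ (n-i)‖ := norm_sub_le _ _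
        _ = 1 + ‖q‖ ^ (n-i) := by rw [norm_one, norm_pow]
    refine h1.trans ?_
    linarith [Real.add_one_le_exp (‖q‖ ^ (n-i))]
  have h2 : ∑ i ∈ Finset.range k, ‖q‖ ^ (n - i) ≤ jtpSq q := by
    have hinj : ∀ i ∈ Finset.range k, ∀ i' ∈ Finset.range k,
        n - 1 - i = n - 1 - i' → i = i' := by
      intro i hi i' hi'
      simp only [Finset.mem_range] at hi hi'
      omega
    have hre : ∀ i ∈ Finset.range k, ‖q‖ ^ (n - i) = ‖q‖ ^ ((n - 1 - i) + 1) := by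
      intro i hi
      simp only [Finset.mem_range] at hi
      congr 1
      omega
    rw [Finset.sum_congr rfl hre]
    have himg : ∑ i ∈ Finset.range k, ‖q‖ ^ ((n - 1 - i) + 1)
        = ∑ j ∈ (Finset.range k).image (fun i => n - 1 - i), ‖q‖ ^ (j + 1) :=
      (Finset.sum_image (f := fun j : ℕ => ‖q‖ ^ (j + 1)) hinj).symm
    rw [himg]
    exact Summable.sum_le_tsum _ (fun j _ => by positivity) hSq
  calc ‖∏ i ∈ Finset.range k, (1 - q ^ (n - i))‖
      = ∏ i ∈ Finset.range k, ‖1 - q ^ (n - i)‖ := norm_prod _ _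
    _ ≤ ∏ i ∈ Finset.range k, Real.exp (‖q‖ ^ (n - i)) :=
        Finset.prod_le_prod (fun i _ => by positivity) (fun i _ => step1 i)
    _ = Real.exp (∑ i ∈ Finset.range k, ‖q‖ ^ (n - i)) := (Real.exp_sum _ _).symm
    _ ≤ Real.exp (jtpSq q) := Real.exp_le_exp.2 h2

lemma jtpG_bound (q : ℂ) (hq : ‖q‖ < 1) {n k : ℕ} (hkn : k ≤ n) :
    ‖jtpG q n k‖ ≤ Real.exp (jtpSq q) * Real.exp ((1 - ‖q‖)⁻¹ * jtpSq q) := by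
  rw [jtpG, norm_div]
  rw [div_le_iff₀ (lt_of_lt_of_le (Real.exp_pos _) (jtpD_lower q hq k))]
  calc ‖∏ i ∈ Finset.range k, (1 - q ^ (n - i))‖ ≤ Real.exp (jtpSq q) :=
        jtp_num_upper q hq hkn
    _ = (Real.exp (jtpSq q) * Real.exp ((1-‖q‖)⁻¹ * jtpSq q))
          * Real.exp (-((1-‖q‖)⁻¹ * jtpSq q)) := by
        rw [mul_assoc, ← Real.exp_add]
        simp
    _ ≤ (Real.exp (jtpSq q) * Real.exp ((1-‖q‖)⁻¹ * jtpSq q)) * ‖jtpD q k‖ := by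
        apply mul_le_mul_of_nonneg_left (jtpD_lower q hq k) (by positivity)

lemma jtp_num_eq (q : ℂ) (hq : ‖q‖ < 1) {n k : ℕ} (hkn : k ≤ n) :
    jtpG q n k = jtpD q n * (jtpD q (n - k))⁻¹ * (jtpD q k)⁻¹ := by
  have h1 := Finset.prod_range_add (fun j => 1 - q ^ (j + 1)) (n - k) k
  rw [show n - k + k = n from by omega] at h1
  have h2 : ∏ i ∈ Finset.range k, (1 - q ^ (n - k + i + 1))
      = ∏ i ∈ Finset.range k, (1 - q ^ (n - i)) := by
    rw [← Finset.prod_range_reflect]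
    apply Finset.prod_congr rfl
    intro j hj
    have hjk : j < k := Finset.mem_range.1 hj
    congr 2
    omega
  have h3 : jtpD q n = jtpD q (n - k) * ∏ i ∈ Finset.range k, (1 - q ^ (n - i)) := by
    rw [jtpD]
    rw [h1]
    rw [← h2]
    rfl
  rw [jtpG]
  have hD1 := jtpD_ne_zero q hq (n - k)
  have hD2 := jtpD_ne_zero q hq k
  field_simp
  linear_combination (-1 : ℂ) * h3

lemma jtpG_tendsto (q : ℂ) (hq : ‖q‖ < 1) (m : ℤ) (P : ℂ)
    (hP : Filter.Tendsto (fun n => jtpD q n) atTop (𝓝 P)) (hPne : P ≠ 0) :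
    Filter.Tendsto (fun M : ℕ => jtpG q (2*M+2) ((m + M).toNat)) atTop (𝓝 P⁻¹) := by
  have h1 : Filter.Tendsto (fun M : ℕ => jtpD q (2*M+2)) atTop (𝓝 P) := by
    apply hP.comp
    apply Filter.tendsto_atTop.2
    intro b
    exact Filter.eventually_atTop.2 ⟨b, fun M hM => by omega⟩
  have h2 : Filter.Tendsto (fun M : ℕ => jtpD q ((2*M+2) - (m + M).toNat)) atTop (𝓝 P) := by
    apply hP.comp
    apply Filter.tendsto_atTop.2
    intro b
    refine Filter.eventually_atTop.2 ⟨b + m.natAbs + 2, fun M hM => ?_⟩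
    omega
  have h3 : Filter.Tendsto (fun M : ℕ => jtpD q ((m + M).toNat)) atTop (𝓝 P) := by
    apply hP.comp
    apply Filter.tendsto_atTop.2
    intro b
    refine Filter.eventually_atTop.2 ⟨b + m.natAbs, fun M hM => ?_⟩
    omega
  have hcomb := (h1.mul (h2.inv₀ hPne)).mul (h3.inv₀ hPne)
  have hval : P * P⁻¹ * P⁻¹ = P⁻¹ := by field_simp
  rw [hval] at hcomb
  apply Filter.Tendsto.congr' _ hcomb
  filter_upwards [Filter.eventually_ge_atTop m.natAbs] with M hM
  have hkn : (m + M).toNat ≤ 2*M+2 := by omega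
  rw [jtp_num_eq q hq hkn]

/-- Jacobi triple product: the bilateral theta series equals the infinite product
`(1-z) ∏_{i=1}^∞ (1-q^i)(1-q^i z)(1-q^i z⁻¹)`. -/
theorem jacobi_triple_product (q z : ℂ) (hq : ‖q‖ < 1) (hz : z ≠ 0) :
    (∑' k : ℤ, (-1) ^ k * z ^ k * q ^ (k * (k - 1) / 2)) =
      (1 - z) * ∏' i : ℕ, ((1 - q ^ (i + 1)) * (1 - q ^ (i + 1) * z) *
        (1 - q ^ (i + 1) * z⁻¹)) := by
  by_cases hq0 : q = 0
  · subst hq0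
    have hLHS : (∑' k : ℤ, (-1:ℂ) ^ k * z ^ k * (0:ℂ) ^ (k * (k - 1) / 2)) = 1 - z := by
      rw [tsum_eq_sum (s := ({0, 1} : Finset ℤ)) ?_]
      · rw [Finset.sum_pair (by norm_num : (0:ℤ) ≠ 1)]
        norm_num
        ring
      · intro k hk
        simp only [Finset.mem_insert, Finset.mem_singleton, not_or] at hk
        have hne : k * (k - 1) / 2 ≠ 0 := by
          intro h0
          have h2 := jtp_evenm k
          rw [h0, zero_mul] at h2
          rcases mul_eq_zero.1 h2.symm with h | h
          · exact hk.1 h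
          · exact hk.2 (by omega)
        rw [zero_zpow _ hne]
        ring
    rw [hLHS]
    have hone : ∀ i : ℕ, ((1:ℂ) - 0^(i+1)) * (1 - 0^(i+1)*z) * (1 - 0^(i+1)*z⁻¹) = 1 := by
      intro i
      rw [zero_pow (Nat.succ_ne_zero i)]
      ring
    rw [tprod_congr hone, tprod_one]
    ring
  · have hqn : 0 < ‖q‖ := norm_pos_iff.2 hq0
    have hzn : 0 < ‖z‖ := norm_pos_iff.2 hz
    have hP1 : HasProd (fun i : ℕ => 1 - q^(i+1)) (∏' i : ℕ, (1 - q^(i+1))) := by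
      have h := jtp_hasProd q 1 hq
      simpa [mul_one] using h
    have hPz : HasProd (fun i : ℕ => 1 - q^(i+1)*z) (∏' i : ℕ, (1 - q^(i+1)*z)) :=
      jtp_hasProd q z hq
    have hPz1 : HasProd (fun i : ℕ => 1 - q^(i+1)*z⁻¹) (∏' i : ℕ, (1 - q^(i+1)*z⁻¹)) :=
      jtp_hasProd q z⁻¹ hq
    set P : ℂ := ∏' i : ℕ, (1 - q^(i+1)) with hPdef
    set Pz : ℂ := ∏' i : ℕ, (1 - q^(i+1)*z) with hPzdef
    set Pz1 : ℂ := ∏' i : ℕ, (1 - q^(i+1)*z⁻¹) with hPz1def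
    have hDten : Filter.Tendsto (fun n => jtpD q n) atTop (𝓝 P) := hP1.tendsto_prod_nat
    have hPne : P ≠ 0 := by
      have hnorm : Real.exp (-((1-‖q‖)⁻¹ * jtpSq q)) ≤ ‖P‖ :=
        ge_of_tendsto hDten.norm (Filter.Eventually.of_forall (jtpD_lower q hq))
      intro h
      rw [h, norm_zero] at hnorm
      exact absurd hnorm (not_le.2 (Real.exp_pos _))
    set C : ℝ := Real.exp (jtpSq q) * Real.exp ((1-‖q‖)⁻¹ * jtpSq q) with hCdef
    have hCpos : 0 < C := by positivity
    set g : ℤ → ℂ := fun m => (-z)^m * q^(m*(m-1)/2) with hgdef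
    set F : ℕ → ℤ → ℂ := fun M m =>
      if m ∈ Finset.Icc (-(M:ℤ)) ((M:ℤ)+2) then g m * jtpG q (2*M+2) ((m+M).toNat) else 0
      with hFdef
    have hbound_sum : Summable (fun m : ℤ => C * (‖z‖^m * ‖q‖^(m*(m-1)/2))) :=
      (jtp_summable_int ‖z‖ ‖q‖ hzn hqn hq).mul_left C
    have hgnorm : ∀ m : ℤ, ‖g m‖ = ‖z‖^m * ‖q‖^(m*(m-1)/2) := by
      intro m
      rw [hgdef]
      simp only [norm_mul, norm_zpow, norm_neg]
    have hFle : ∀ M : ℕ, ∀ m : ℤ, ‖F M m‖ ≤ C * (‖z‖^m * ‖q‖^(m*(m-1)/2)) := by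
      intro M m
      have hzp : (0:ℝ) < ‖z‖^m := zpow_pos hzn m
      have hqp : (0:ℝ) < ‖q‖^(m*(m-1)/2) := zpow_pos hqn _
      rw [hFdef]
      dsimp only
      split_ifs with hmem
      · have hmem' := Finset.mem_Icc.1 hmem
        have hkn : (m+M).toNat ≤ 2*M+2 := by omega
        rw [norm_mul, hgnorm, mul_comm C]
        exact mul_le_mul_of_nonneg_left (hCdef ▸ jtpG_bound q hq hkn) (by positivity)
      · rw [norm_zero]
        positivity
    have hab : ∀ m : ℤ, Filter.Tendsto (fun M => F M m) atTop (𝓝 (g m * P⁻¹)) := by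
      intro m
      have hGt := (jtpG_tendsto q hq m P hDten hPne).const_mul (g m)
      apply Filter.Tendsto.congr' _ hGt
      filter_upwards [Filter.eventually_ge_atTop m.natAbs] with M hM
      rw [hFdef]
      dsimp only
      rw [if_pos (Finset.mem_Icc.2 (by omega))]
    have hconv : Filter.Tendsto (fun M => ∑' m, F M m) atTop (𝓝 (∑' m : ℤ, g m * P⁻¹)) :=
      tendsto_tsum_of_dominated_convergence hbound_sum hab
        (Filter.Eventually.of_forall hFle)
    have hFM : ∀ M : ℕ, (∑' m, F M m)
        = (1 - z) * (∏ i ∈ Finset.range (M+1), (1 - q^(i+1) * z))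
          * (∏ j ∈ Finset.range M, (1 - q^(j+1) * z⁻¹)) := by
      intro M
      calc (∑' m, F M m) = ∑ m ∈ Finset.Icc (-(M:ℤ)) ((M:ℤ)+2), F M m := by
            apply tsum_eq_sum
            intro m hm
            rw [hFdef]
            exact if_neg hm
        _ = ∑ k ∈ Finset.range (2*M+3),
              (-z) ^ ((k:ℤ) - M) * q ^ ((((k:ℤ)-M) * ((k:ℤ)-M-1)) / 2) * jtpG q (2*M+2) k := by
            apply Finset.sum_nbij' (i := fun (m : ℤ) => (m + M).toNat)
              (j := fun (k : ℕ) => (k : ℤ) - M)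
            · intro m hm
              have := Finset.mem_Icc.1 hm
              exact Finset.mem_range.2 (by omega)
            · intro k hk
              have := Finset.mem_range.1 hk
              exact Finset.mem_Icc.2 (by omega)
            · intro m hm
              have := Finset.mem_Icc.1 hm
              omega
            · intro k hk
              have := Finset.mem_range.1 hk
              omega
            · intro m hm
              have hmm := Finset.mem_Icc.1 hm
              rw [hFdef]
              dsimp only
              rw [if_pos hm, hgdef]
              have hcast : (((m + M).toNat : ℤ)) - M = m := by omega
              rw [hcast]
        _ = _ := (jtp_finite q z hq hq0 hz M).symm
    have hLz : Filter.Tendsto (fun M : ℕ => ∏ i ∈ Finset.range (M+1), (1 - q^(i+1)*z))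
        atTop (𝓝 Pz) := hPz.tendsto_prod_nat.comp (tendsto_add_atTop_nat 1)
    have hLz1 : Filter.Tendsto (fun M : ℕ => ∏ j ∈ Finset.range M, (1 - q^(j+1)*z⁻¹))
        atTop (𝓝 Pz1) := hPz1.tendsto_prod_nat
    have hprod : Filter.Tendsto (fun M : ℕ => (1-z)
        * (∏ i ∈ Finset.range (M+1), (1 - q^(i+1)*z))
        * (∏ j ∈ Finset.range M, (1 - q^(j+1)*z⁻¹))) atTop (𝓝 ((1-z) * Pz * Pz1)) :=
      (Filter.Tendsto.const_mul (1-z) hLz).mul hLz1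
    have heq : (∑' m : ℤ, g m * P⁻¹) = (1-z) * Pz * Pz1 :=
      tendsto_nhds_unique ((Filter.tendsto_congr hFM).1 hconv) hprod
    have htsum : (∑' m : ℤ, g m * P⁻¹) = (∑' m : ℤ, g m) * P⁻¹ := tsum_mul_right
    have hRHS : (∏' i : ℕ, ((1 - q^(i+1)) * (1 - q^(i+1)*z) * (1 - q^(i+1)*z⁻¹)))
        = P * Pz * Pz1 := ((hP1.mul hPz).mul hPz1).tprod_eq
    have hLHSeq : (∑' k : ℤ, (-1:ℂ)^k * z^k * q^(k*(k-1)/2)) = ∑' m : ℤ, g m := by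
      apply tsum_congr
      intro m
      rw [hgdef]
      dsimp only
      rw [show -z = (-1 : ℂ) * z from by ring, mul_zpow]
    rw [hLHSeq, hRHS]
    rw [htsum] at heq
    calc (∑' m : ℤ, g m) = (∑' m : ℤ, g m) * P⁻¹ * P := by field_simp
      _ = ((1-z) * Pz * Pz1) * P := by rw [heq]
      _ = (1-z) * (P * Pz * Pz1) := by ring
end

section
/- Let g(z) = ∑_{k∈ℤ} (-1)^k z^k q^{k(k-1)/2} and f(z₁,z₂) = ∑_{i∈ℤ} (-1)^i q^{i(3i-1)/2}(z₁^{3i} z₂^{1-3i} + z₁^{1-3i} z₂^{3i}). Then for all nonzero z₁,z₂,z₃: z₁² g(z₂z₃/z₁²) f(z₂,z₃) + z₂² g(z₃z₁/z₂²) f(z₃,z₁) + z₃² g(z₁z₂/z₃²) f(z₁,z₂) = 0. -/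
/-- Theta function `g(z) = ∑_{k∈ℤ} (-1)^k z^k q^{k(k-1)/2}`. -/
noncomputable def theta (q z : ℂ) : ℂ := ∑' k : ℤ, (-1) ^ k * z ^ k * q ^ (k * (k - 1) / 2)

/-- `f(z₁,z₂) = ∑_{i∈ℤ} (-1)^i q^{i(3i-1)/2} (z₁^{3i} z₂^{1-3i} + z₁^{1-3i} z₂^{3i})`. -/
noncomputable def fdef (q z₁ z₂ : ℂ) : ℂ :=
  ∑' i : ℤ, (-1) ^ i * q ^ (i * (3 * i - 1) / 2) *
    (z₁ ^ (3 * i) * z₂ ^ (1 - 3 * i) + z₁ ^ (1 - 3 * i) * z₂ ^ (3 * i))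

open Filter Topology

/-- zpow of sum with nonneg exponents, for possibly-zero base. -/
lemma zpow_add_nonneg'' (q : ℂ) {a b : ℤ} (ha : 0 ≤ a) (hb : 0 ≤ b) :
    q ^ (a + b) = q ^ a * q ^ b := by
  lift a to ℕ using ha
  lift b to ℕ using hb
  rw [← Nat.cast_add, zpow_natCast, zpow_natCast, zpow_natCast, pow_add]

/-- Ratio-type summability helper. -/
lemma aux_ratio (f : ℕ → ℝ) (r ρ : ℝ) (hρ0 : 0 ≤ ρ) (hρ : ρ < 1)
    (hnn : ∀ n, 0 ≤ f n) (hstep : ∀ n, f (n + 1) ≤ r * ρ ^ n * f n) :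
    Summable f := by
  apply summable_of_ratio_norm_eventually_le (r := 1/2) (by norm_num)
  have h0 : Tendsto (fun n : ℕ => r * ρ ^ n) atTop (𝓝 0) := by
    simpa using (tendsto_pow_atTop_nhds_zero_of_lt_one hρ0 hρ).const_mul r
  have h1 : ∀ᶠ n : ℕ in atTop, r * ρ ^ n ≤ 1/2 :=
    h0.eventually_le_const (by norm_num)
  filter_upwards [h1] with n hn
  rw [Real.norm_of_nonneg (hnn _), Real.norm_of_nonneg (hnn _)]
  calc f (n + 1) ≤ r * ρ ^ n * f n := hstep n
    _ ≤ (1/2) * f n := mul_le_mul_of_nonneg_right hn (hnn n)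

/-- Master summability lemma for `‖w^k * q^(e k)‖` over `ℤ`. -/
lemma master {w q : ℂ} (hw : w ≠ 0) (hq : ‖q‖ < 1) (e : ℤ → ℤ)
    (h1 : ∀ n : ℕ, 0 ≤ e n) (h2 : ∀ n : ℕ, e n + n ≤ e (n + 1))
    (h3 : ∀ n : ℕ, 0 ≤ e (-n)) (h4 : ∀ n : ℕ, e (-n) + n ≤ e (-(n + 1 : ℕ))) :
    Summable (fun k : ℤ => ‖w ^ k * q ^ e k‖) := by
  have hwn : (0:ℝ) < ‖w‖ := norm_pos_iff.2 hw
  apply Summable.of_nat_of_neg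
  · apply Summable.congr (f := fun n : ℕ => ‖w‖ ^ n * ‖q‖ ^ (e n).toNat)
    · apply aux_ratio _ ‖w‖ ‖q‖ (norm_nonneg q) hq
      · intro n; positivity
      · intro n
        have hd : (e (n+1)).toNat = (e n).toNat + (e (n+1) - e n).toNat := by
          have := h1 n; have := h2 n; omega
        have hd2 : n ≤ (e (n+1) - e n).toNat := by
          have := h2 n; omega
        push_cast [hd]
        rw [pow_succ, pow_add]
        have hpow : ‖q‖ ^ (e (n+1) - e n).toNat ≤ ‖q‖ ^ n :=
          pow_le_pow_of_le_one (norm_nonneg q) hq.le hd2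
        calc ‖w‖ ^ n * ‖w‖ * (‖q‖ ^ (e n).toNat * ‖q‖ ^ (e (n+1) - e n).toNat)
            ≤ ‖w‖ ^ n * ‖w‖ * (‖q‖ ^ (e n).toNat * ‖q‖ ^ n) := by
              apply mul_le_mul_of_nonneg_left (mul_le_mul_of_nonneg_left hpow (by positivity))
              positivity
          _ = ‖w‖ * ‖q‖ ^ n * (‖w‖ ^ n * ‖q‖ ^ (e n).toNat) := by ring
    · intro n
      rw [norm_mul, norm_zpow, norm_zpow, zpow_natCast]
      congr 1
      rw [← zpow_natCast, Int.toNat_of_nonneg (h1 n)]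
  · apply Summable.congr (f := fun n : ℕ => (‖w‖⁻¹) ^ n * ‖q‖ ^ (e (-n)).toNat)
    · apply aux_ratio _ ‖w‖⁻¹ ‖q‖ (norm_nonneg q) hq
      · intro n; positivity
      · intro n
        have hd : (e (-(n+1:ℕ))).toNat = (e (-n)).toNat + (e (-(n+1:ℕ)) - e (-n)).toNat := by
          have := h3 n; have := h4 n; omega
        have hd2 : n ≤ (e (-(n+1:ℕ)) - e (-n)).toNat := by
          have := h4 n; omega
        rw [hd, pow_succ, pow_add]
        have hpow : ‖q‖ ^ (e (-(n+1:ℕ)) - e (-n)).toNat ≤ ‖q‖ ^ n :=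
          pow_le_pow_of_le_one (norm_nonneg q) hq.le hd2
        calc ‖w‖⁻¹ ^ n * ‖w‖⁻¹ * (‖q‖ ^ (e (-n)).toNat * ‖q‖ ^ (e (-(n+1:ℕ)) - e (-n)).toNat)
            ≤ ‖w‖⁻¹ ^ n * ‖w‖⁻¹ * (‖q‖ ^ (e (-n)).toNat * ‖q‖ ^ n) := by
              apply mul_le_mul_of_nonneg_left (mul_le_mul_of_nonneg_left hpow (by positivity))
              positivity
          _ = ‖w‖⁻¹ * ‖q‖ ^ n * (‖w‖⁻¹ ^ n * ‖q‖ ^ (e (-n)).toNat) := by ring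
    · intro n
      rw [norm_mul, norm_zpow, norm_zpow, zpow_neg, ← inv_zpow, zpow_natCast]
      congr 1
      rw [← zpow_natCast, Int.toNat_of_nonneg (h3 n)]
lemma two_dvd_e1 (k : ℤ) : 2 ∣ k * (k - 1) := by
  have h := Int.even_mul_succ_self (k - 1)
  have : (k - 1) * (k - 1 + 1) = k * (k - 1) := by ring
  rw [this] at h
  exact h.two_dvd

lemma two_dvd_e3 (k : ℤ) : 2 ∣ k * (3 * k - 1) := by
  obtain ⟨m, hm⟩ := two_dvd_e1 k
  exact ⟨m + k * k, by linear_combination hm⟩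

lemma e1_nonneg (k : ℤ) : 0 ≤ k * (k - 1) / 2 := by
  apply Int.ediv_nonneg _ (by norm_num)
  rcases le_or_gt 1 k with h | h
  · exact mul_nonneg (by omega) (by omega)
  · nlinarith

lemma e3_nonneg (k : ℤ) : 0 ≤ k * (3 * k - 1) / 2 := by
  apply Int.ediv_nonneg _ (by norm_num)
  rcases le_or_gt 1 k with h | h
  · exact mul_nonneg (by omega) (by omega)
  · nlinarith

lemma summable_theta_term {w q : ℂ} (hw : w ≠ 0) (hq : ‖q‖ < 1) :
    Summable (fun k : ℤ => ‖w ^ k * q ^ (k * (k - 1) / 2)‖) := by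
  apply master hw hq
  · intro n; exact e1_nonneg _
  · intro n
    obtain ⟨m, hm⟩ := two_dvd_e1 (n : ℤ)
    have a1 : (n : ℤ) * ((n : ℤ) - 1) / 2 = m := by omega
    have h2 : ((n : ℤ) + 1) * (((n : ℤ) + 1) - 1) = 2 * (m + n) := by linear_combination hm
    have a2 : ((n : ℤ) + 1) * (((n : ℤ) + 1) - 1) / 2 = m + n := by omega
    omega
  · intro n; exact e1_nonneg _
  · intro n
    obtain ⟨m, hm⟩ := two_dvd_e1 (-(n : ℤ))
    have a1 : (-(n : ℤ)) * ((-(n : ℤ)) - 1) / 2 = m := by omega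
    have h2 : (-((n : ℕ) + 1 : ℕ) : ℤ) * ((-((n : ℕ) + 1 : ℕ) : ℤ) - 1) = 2 * (m + n + 1) := by
      push_cast; linear_combination hm
    have a2 : (-((n : ℕ) + 1 : ℕ) : ℤ) * ((-((n : ℕ) + 1 : ℕ) : ℤ) - 1) / 2 = m + n + 1 := by omega
    omega

lemma summable_f_term {w q : ℂ} (hw : w ≠ 0) (hq : ‖q‖ < 1) :
    Summable (fun k : ℤ => ‖w ^ k * q ^ (k * (3 * k - 1) / 2)‖) := by
  apply master hw hq
  · intro n; exact e3_nonneg _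
  · intro n
    obtain ⟨m, hm⟩ := two_dvd_e3 (n : ℤ)
    have a1 : (n : ℤ) * (3 * (n : ℤ) - 1) / 2 = m := by omega
    have h2 : ((n : ℤ) + 1) * (3 * ((n : ℤ) + 1) - 1) = 2 * (m + 3 * n + 1) := by
      linear_combination hm
    have a2 : ((n : ℤ) + 1) * (3 * ((n : ℤ) + 1) - 1) / 2 = m + 3 * n + 1 := by omega
    omega
  · intro n; exact e3_nonneg _
  · intro n
    obtain ⟨m, hm⟩ := two_dvd_e3 (-(n : ℤ))
    have a1 : (-(n : ℤ)) * (3 * (-(n : ℤ)) - 1) / 2 = m := by omega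
    have h2 : (-((n : ℕ) + 1 : ℕ) : ℤ) * (3 * (-((n : ℕ) + 1 : ℕ) : ℤ) - 1)
        = 2 * (m + 3 * n + 2) := by push_cast; linear_combination hm
    have a2 : (-((n : ℕ) + 1 : ℕ) : ℤ) * (3 * (-((n : ℕ) + 1 : ℕ) : ℤ) - 1) / 2
        = m + 3 * n + 2 := by omega
    omega
/-- The canonical double-series term. Index `j` is the theta index, `i` the `f` index. -/
noncomputable def Wt (q x y z : ℂ) (j i : ℤ) : ℂ :=
  (-1) ^ i * (-1) ^ j * q ^ (j * (j - 1) / 2) * q ^ (i * (3 * i - 1) / 2) *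
    x ^ (2 - 2 * j) * y ^ (j + 3 * i) * z ^ (j + 1 - 3 * i)

lemma Wt_eq_mul {q x y z : ℂ} (hx : x ≠ 0) (hy : y ≠ 0) (hz : z ≠ 0) (j i : ℤ) :
    Wt q x y z j i =
      (x ^ 2 * z * ((-(y * z / x ^ 2)) ^ j * q ^ (j * (j - 1) / 2))) *
        ((-(y / z) ^ 3) ^ i * q ^ (i * (3 * i - 1) / 2)) := by
  have hx2 : (x ^ 2 : ℂ) ≠ 0 := pow_ne_zero _ hx
  have e1 : (-(y * z / x ^ 2)) ^ j = (-1) ^ j * (y ^ j * z ^ j * (x ^ (2 * j))⁻¹) := by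
    rw [show -(y * z / x ^ 2) = (-1) * (y * z * (x ^ 2)⁻¹) by ring, mul_zpow, mul_zpow,
      mul_zpow, inv_zpow, ← zpow_natCast x 2, ← zpow_mul]
    norm_num
  have e2 : (-(y / z) ^ 3) ^ i = (-1) ^ i * (y ^ (3 * i) * (z ^ (3 * i))⁻¹) := by
    rw [show -((y / z) ^ 3) = (-1) * (y ^ 3 * (z ^ 3)⁻¹) by rw [div_pow]; ring, mul_zpow,
      mul_zpow, inv_zpow, ← zpow_natCast y 3, ← zpow_natCast z 3, ← zpow_mul, ← zpow_mul]
    norm_num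
  rw [e1, e2, Wt,
    show (2 - 2 * j) = 2 - 2 * j by rfl,
    zpow_sub₀ hx 2 (2 * j),
    show (j + 3 * i : ℤ) = j + 3 * i by rfl,
    zpow_add₀ hy j (3 * i),
    show (j + 1 - 3 * i : ℤ) = (j + 1) - 3 * i by rfl,
    zpow_sub₀ hz (j + 1) (3 * i), zpow_add₀ hz j 1, zpow_one]
  rw [show ((2 : ℤ)) = ((2 : ℕ) : ℤ) by norm_num, zpow_natCast x 2]
  field_simp

lemma summable_norm_Wt {q x y z : ℂ} (hq : ‖q‖ < 1) (hx : x ≠ 0) (hy : y ≠ 0) (hz : z ≠ 0) :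
    Summable (fun p : ℤ × ℤ => ‖Wt q x y z p.1 p.2‖) := by
  have hw1 : (-(y * z / x ^ 2)) ≠ 0 := by
    simp only [ne_eq, neg_eq_zero, div_eq_zero_iff, mul_eq_zero, pow_eq_zero_iff]
    push_neg
    refine ⟨⟨hy, hz⟩, pow_ne_zero _ hx⟩
  have hw2 : (-(y / z) ^ 3) ≠ 0 := by
    simp only [ne_eq, neg_eq_zero, pow_eq_zero_iff]
    exact fun h => absurd (div_eq_zero_iff.mp (by simpa using h)) (by push_neg; exact ⟨hy, hz⟩)
  have hu : Summable (fun j : ℤ =>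
      ‖x ^ 2 * z * ((-(y * z / x ^ 2)) ^ j * q ^ (j * (j - 1) / 2))‖) := by
    apply Summable.congr (((summable_theta_term hw1 hq)).mul_left ‖x ^ 2 * z‖)
    intro j
    exact (norm_mul _ _).symm
  have hv : Summable (fun i : ℤ => ‖(-(y / z) ^ 3) ^ i * q ^ (i * (3 * i - 1) / 2)‖) :=
    summable_f_term hw2 hq
  apply Summable.congr (hu.mul_norm hv)
  intro p
  rw [← Wt_eq_mul hx hy hz]
lemma neg_one_ne_zero' : ((-1 : ℂ)) ≠ 0 := neg_ne_zero.mpr one_ne_zero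

lemma Wt_pair_even {q x y z : ℂ} (j i : ℤ) (h : (i + j) % 2 = 0) :
    Wt q y z x (1 - (j + 3 * i) / 2) ((j - i) / 2) = - Wt q x y z j i := by
  set j' : ℤ := 1 - (j + 3 * i) / 2 with hj'
  set i' : ℤ := (j - i) / 2 with hi'
  have f1 : 2 * i' = j - i := by omega
  have f2 : 2 * j' = 2 - j - 3 * i := by omega
  have key4 : 4 * (j' * (j' - 1) + i' * (3 * i' - 1)) = 4 * (j * (j - 1) + i * (3 * i - 1)) := by
    linear_combination (2 * j' - j - 3 * i) * f2 + (6 * i' + 3 * j - 3 * i - 2) * f1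
  have hE : j' * (j' - 1) / 2 + i' * (3 * i' - 1) / 2
      = j * (j - 1) / 2 + i * (3 * i - 1) / 2 := by
    obtain ⟨a, ha⟩ := two_dvd_e1 j'
    obtain ⟨b, hb⟩ := two_dvd_e3 i'
    obtain ⟨c, hc⟩ := two_dvd_e1 j
    obtain ⟨d, hd⟩ := two_dvd_e3 i
    have r1 : j' * (j' - 1) / 2 = a := by rw [ha]; omega
    have r2 : i' * (3 * i' - 1) / 2 = b := by rw [hb]; omega
    have r3 : j * (j - 1) / 2 = c := by rw [hc]; omega
    have r4 : i * (3 * i - 1) / 2 = d := by rw [hd]; omega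
    rw [r1, r2, r3, r4]
    linarith [key4, ha, hb, hc, hd]
  have g1 : 2 - 2 * j' = j + 3 * i := by omega
  have g2 : j' + 3 * i' = j + 1 - 3 * i := by omega
  have g3 : j' + 1 - 3 * i' = 2 - 2 * j := by omega
  have hs1 : ((-1 : ℂ)) ^ i' * (-1) ^ j' = -1 := by
    rw [← zpow_add₀ neg_one_ne_zero']
    exact Odd.neg_one_zpow ⟨-i, by omega⟩
  have hs2 : ((-1 : ℂ)) ^ i * (-1) ^ j = 1 := by
    rw [← zpow_add₀ neg_one_ne_zero']
    exact Even.neg_one_zpow ⟨(i + j) / 2, by omega⟩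
  have hqq : q ^ (j' * (j' - 1) / 2) * q ^ (i' * (3 * i' - 1) / 2)
      = q ^ (j * (j - 1) / 2) * q ^ (i * (3 * i - 1) / 2) := by
    rw [← zpow_add_nonneg'' q (e1_nonneg j') (e3_nonneg i'),
      ← zpow_add_nonneg'' q (e1_nonneg j) (e3_nonneg i), hE]
  rw [Wt, Wt, g1, g2, g3]
  calc ((-1:ℂ)) ^ i' * (-1) ^ j' * q ^ (j' * (j' - 1) / 2) * q ^ (i' * (3 * i' - 1) / 2) *
        y ^ (j + 3 * i) * z ^ (j + 1 - 3 * i) * x ^ (2 - 2 * j)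
      = ((-1:ℂ)) ^ i' * (-1) ^ j' * (q ^ (j' * (j' - 1) / 2) * q ^ (i' * (3 * i' - 1) / 2)) *
        (y ^ (j + 3 * i) * z ^ (j + 1 - 3 * i) * x ^ (2 - 2 * j)) := by ring
    _ = (-1 : ℂ) * (q ^ (j * (j - 1) / 2) * q ^ (i * (3 * i - 1) / 2)) *
        (y ^ (j + 3 * i) * z ^ (j + 1 - 3 * i) * x ^ (2 - 2 * j)) := by rw [hs1, hqq]
    _ = -(((-1:ℂ)) ^ i * (-1) ^ j * q ^ (j * (j - 1) / 2) * q ^ (i * (3 * i - 1) / 2) *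
        x ^ (2 - 2 * j) * y ^ (j + 3 * i) * z ^ (j + 1 - 3 * i)) := by
        rw [show ((-1:ℂ)) ^ i * (-1) ^ j * q ^ (j * (j - 1) / 2) * q ^ (i * (3 * i - 1) / 2) *
          x ^ (2 - 2 * j) * y ^ (j + 3 * i) * z ^ (j + 1 - 3 * i)
          = ((-1:ℂ)) ^ i * (-1) ^ j * (q ^ (j * (j - 1) / 2) * q ^ (i * (3 * i - 1) / 2) *
            (y ^ (j + 3 * i) * z ^ (j + 1 - 3 * i) * x ^ (2 - 2 * j))) by ring, hs2]
        ring

lemma Wt_pair_odd {q x y z : ℂ} (j i : ℤ) (h : (i + j) % 2 = 1) :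
    Wt q z x y ((1 - j + 3 * i) / 2) ((1 - i - j) / 2) = - Wt q x y z j i := by
  set j' : ℤ := (1 - j + 3 * i) / 2 with hj'
  set i' : ℤ := (1 - i - j) / 2 with hi'
  have f1 : 2 * i' = 1 - i - j := by omega
  have f2 : 2 * j' = 1 - j + 3 * i := by omega
  have key4 : 4 * (j' * (j' - 1) + i' * (3 * i' - 1)) = 4 * (j * (j - 1) + i * (3 * i - 1)) := by
    linear_combination (2 * j' - 1 - j + 3 * i) * f2 + (6 * i' + 1 - 3 * i - 3 * j) * f1
  have hE : j' * (j' - 1) / 2 + i' * (3 * i' - 1) / 2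
      = j * (j - 1) / 2 + i * (3 * i - 1) / 2 := by
    obtain ⟨a, ha⟩ := two_dvd_e1 j'
    obtain ⟨b, hb⟩ := two_dvd_e3 i'
    obtain ⟨c, hc⟩ := two_dvd_e1 j
    obtain ⟨d, hd⟩ := two_dvd_e3 i
    have r1 : j' * (j' - 1) / 2 = a := by rw [ha]; omega
    have r2 : i' * (3 * i' - 1) / 2 = b := by rw [hb]; omega
    have r3 : j * (j - 1) / 2 = c := by rw [hc]; omega
    have r4 : i * (3 * i - 1) / 2 = d := by rw [hd]; omega
    rw [r1, r2, r3, r4]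
    linarith [key4, ha, hb, hc, hd]
  have g1 : 2 - 2 * j' = j + 1 - 3 * i := by omega
  have g2 : j' + 3 * i' = 2 - 2 * j := by omega
  have g3 : j' + 1 - 3 * i' = j + 3 * i := by omega
  have hs1 : ((-1 : ℂ)) ^ i' * (-1) ^ j' = 1 := by
    rw [← zpow_add₀ neg_one_ne_zero']
    exact Even.neg_one_zpow ⟨(i' + j') - (i' + j') / 2, by omega⟩
  have hs2 : ((-1 : ℂ)) ^ i * (-1) ^ j = -1 := by
    rw [← zpow_add₀ neg_one_ne_zero']
    exact Odd.neg_one_zpow ⟨(i + j - 1) / 2, by omega⟩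
  have hqq : q ^ (j' * (j' - 1) / 2) * q ^ (i' * (3 * i' - 1) / 2)
      = q ^ (j * (j - 1) / 2) * q ^ (i * (3 * i - 1) / 2) := by
    rw [← zpow_add_nonneg'' q (e1_nonneg j') (e3_nonneg i'),
      ← zpow_add_nonneg'' q (e1_nonneg j) (e3_nonneg i), hE]
  rw [Wt, Wt, g1, g2, g3]
  calc ((-1:ℂ)) ^ i' * (-1) ^ j' * q ^ (j' * (j' - 1) / 2) * q ^ (i' * (3 * i' - 1) / 2) *
        z ^ (j + 1 - 3 * i) * x ^ (2 - 2 * j) * y ^ (j + 3 * i)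
      = ((-1:ℂ)) ^ i' * (-1) ^ j' * (q ^ (j' * (j' - 1) / 2) * q ^ (i' * (3 * i' - 1) / 2)) *
        (y ^ (j + 3 * i) * z ^ (j + 1 - 3 * i) * x ^ (2 - 2 * j)) := by ring
    _ = (1 : ℂ) * (q ^ (j * (j - 1) / 2) * q ^ (i * (3 * i - 1) / 2)) *
        (y ^ (j + 3 * i) * z ^ (j + 1 - 3 * i) * x ^ (2 - 2 * j)) := by rw [hs1, hqq]
    _ = -(((-1:ℂ)) ^ i * (-1) ^ j * q ^ (j * (j - 1) / 2) * q ^ (i * (3 * i - 1) / 2) *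
        x ^ (2 - 2 * j) * y ^ (j + 3 * i) * z ^ (j + 1 - 3 * i)) := by
        rw [show ((-1:ℂ)) ^ i * (-1) ^ j * q ^ (j * (j - 1) / 2) * q ^ (i * (3 * i - 1) / 2) *
          x ^ (2 - 2 * j) * y ^ (j + 3 * i) * z ^ (j + 1 - 3 * i)
          = ((-1:ℂ)) ^ i * (-1) ^ j * (q ^ (j * (j - 1) / 2) * q ^ (i * (3 * i - 1) / 2) *
            (y ^ (j + 3 * i) * z ^ (j + 1 - 3 * i) * x ^ (2 - 2 * j))) by ring, hs2]
        ring
/-- The six-fold family of terms. -/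
noncomputable def bigF (q z₁ z₂ z₃ : ℂ) (t : Fin 6 × ℤ × ℤ) : ℂ :=
  if t.1 = 0 then Wt q z₁ z₂ z₃ t.2.1 t.2.2
  else if t.1 = 1 then Wt q z₁ z₃ z₂ t.2.1 t.2.2
  else if t.1 = 2 then Wt q z₂ z₃ z₁ t.2.1 t.2.2
  else if t.1 = 3 then Wt q z₂ z₁ z₃ t.2.1 t.2.2
  else if t.1 = 4 then Wt q z₃ z₁ z₂ t.2.1 t.2.2
  else Wt q z₃ z₂ z₁ t.2.1 t.2.2

def cyc1 : Fin 6 → Fin 6 := ![2, 5, 4, 1, 0, 3]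
def cyc2 : Fin 6 → Fin 6 := ![4, 3, 0, 5, 2, 1]

/-- The sign-reversing involution. -/
def phi (t : Fin 6 × ℤ × ℤ) : Fin 6 × ℤ × ℤ :=
  if (t.2.2 + t.2.1) % 2 = 0 then (cyc1 t.1, 1 - (t.2.1 + 3 * t.2.2) / 2, (t.2.1 - t.2.2) / 2)
  else (cyc2 t.1, (1 - t.2.1 + 3 * t.2.2) / 2, (1 - t.2.2 - t.2.1) / 2)

lemma phi_even (s : Fin 6) (j i : ℤ) (h : (i + j) % 2 = 0) :
    phi (s, j, i) = (cyc1 s, 1 - (j + 3 * i) / 2, (j - i) / 2) := by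
  simp only [phi]; rw [if_pos h]

lemma phi_odd (s : Fin 6) (j i : ℤ) (h : (i + j) % 2 = 1) :
    phi (s, j, i) = (cyc2 s, (1 - j + 3 * i) / 2, (1 - i - j) / 2) := by
  simp only [phi]; rw [if_neg (by omega)]

lemma phi_invol : Function.Involutive phi := by
  rintro ⟨s, j, i⟩
  rcases Int.emod_two_eq_zero_or_one (i + j) with h | h
  · rw [phi_even s j i h, phi_odd _ _ _ (by omega)]
    refine Prod.ext ?_ (Prod.ext ?_ ?_)
    · show cyc2 (cyc1 s) = s
      fin_cases s <;> rfl
    · show (1 - (1 - (j + 3 * i) / 2) + 3 * ((j - i) / 2)) / 2 = j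
      omega
    · show (1 - (j - i) / 2 - (1 - (j + 3 * i) / 2)) / 2 = i
      omega
  · rw [phi_odd s j i h, phi_even _ _ _ (by omega)]
    refine Prod.ext ?_ (Prod.ext ?_ ?_)
    · show cyc1 (cyc2 s) = s
      fin_cases s <;> rfl
    · show 1 - ((1 - j + 3 * i) / 2 + 3 * ((1 - i - j) / 2)) / 2 = j
      omega
    · show ((1 - j + 3 * i) / 2 - (1 - i - j) / 2) / 2 = i
      omega

lemma bigF_phi (q z₁ z₂ z₃ : ℂ) (t : Fin 6 × ℤ × ℤ) :
    bigF q z₁ z₂ z₃ (phi t) = - bigF q z₁ z₂ z₃ t := by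
  obtain ⟨s, j, i⟩ := t
  rcases Int.emod_two_eq_zero_or_one (i + j) with h | h
  · rw [phi_even s j i h]
    fin_cases s <;>
      · simp only [bigF, cyc1]
        norm_num
        exact Wt_pair_even j i h
  · rw [phi_odd s j i h]
    fin_cases s <;>
      · simp only [bigF, cyc2]
        norm_num
        exact Wt_pair_odd j i h
lemma tsum_bigF_zero (q z₁ z₂ z₃ : ℂ) : ∑' t, bigF q z₁ z₂ z₃ t = 0 := by
  have h1 : ∑' t, bigF q z₁ z₂ z₃ (phi t) = ∑' t, bigF q z₁ z₂ z₃ t :=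
    (Function.Involutive.toPerm phi phi_invol).tsum_eq (bigF q z₁ z₂ z₃)
  have h2 : ∑' t, bigF q z₁ z₂ z₃ (phi t) = - ∑' t, bigF q z₁ z₂ z₃ t := by
    rw [tsum_congr (bigF_phi q z₁ z₂ z₃), tsum_neg]
  have h := h1.symm.trans h2
  linear_combination h / 2
lemma expand_term {q x y z : ℂ} (hx : x ≠ 0) (hy : y ≠ 0) (hz : z ≠ 0) (j i : ℤ) :
    x ^ 2 * ((-1 : ℂ) ^ j * (y * z / x ^ 2) ^ j * q ^ (j * (j - 1) / 2) *
      ((-1 : ℂ) ^ i * q ^ (i * (3 * i - 1) / 2) *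
        (y ^ (3 * i) * z ^ (1 - 3 * i) + y ^ (1 - 3 * i) * z ^ (3 * i)))) =
    Wt q x y z j i + Wt q x z y j i := by
  have e1 : (y * z / x ^ 2) ^ j = y ^ j * z ^ j * (x ^ (2 * j))⁻¹ := by
    rw [show y * z / x ^ 2 = y * (z * (x ^ 2)⁻¹) by ring, mul_zpow, mul_zpow,
      inv_zpow, ← zpow_natCast x 2, ← zpow_mul]
    norm_num
    ring
  have e2 : z ^ (1 - 3 * i) = z * (z ^ (3 * i))⁻¹ := by
    rw [zpow_sub₀ hz 1 (3 * i), zpow_one, div_eq_mul_inv]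
  have e3 : y ^ (1 - 3 * i) = y * (y ^ (3 * i))⁻¹ := by
    rw [zpow_sub₀ hy 1 (3 * i), zpow_one, div_eq_mul_inv]
  have w1 : Wt q x y z j i = (-1) ^ i * (-1) ^ j * q ^ (j * (j - 1) / 2) *
      q ^ (i * (3 * i - 1) / 2) * (x ^ (2 : ℕ) * (x ^ (2 * j))⁻¹) *
      (y ^ j * y ^ (3 * i)) * (z ^ j * z * (z ^ (3 * i))⁻¹) := by
    rw [Wt, zpow_sub₀ hx 2 (2 * j), zpow_add₀ hy j (3 * i),
      show (j + 1 - 3 * i : ℤ) = (j + 1) - 3 * i by ring,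
      zpow_sub₀ hz (j + 1) (3 * i), zpow_add₀ hz j 1, zpow_one,
      show ((2 : ℤ)) = ((2 : ℕ) : ℤ) by norm_num, zpow_natCast x 2]
    field_simp
  have w2 : Wt q x z y j i = (-1) ^ i * (-1) ^ j * q ^ (j * (j - 1) / 2) *
      q ^ (i * (3 * i - 1) / 2) * (x ^ (2 : ℕ) * (x ^ (2 * j))⁻¹) *
      (z ^ j * z ^ (3 * i)) * (y ^ j * y * (y ^ (3 * i))⁻¹) := by
    rw [Wt, zpow_sub₀ hx 2 (2 * j), zpow_add₀ hz j (3 * i),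
      show (j + 1 - 3 * i : ℤ) = (j + 1) - 3 * i by ring,
      zpow_sub₀ hy (j + 1) (3 * i), zpow_add₀ hy j 1, zpow_one,
      show ((2 : ℤ)) = ((2 : ℕ) : ℤ) by norm_num, zpow_natCast x 2]
    field_simp
  rw [e1, e2, e3, w1, w2]
  ring

lemma piece {q x y z : ℂ} (hq : ‖q‖ < 1) (hx : x ≠ 0) (hy : y ≠ 0) (hz : z ≠ 0) :
    x ^ 2 * theta q (y * z / x ^ 2) * fdef q y z =
      (∑' p : ℤ × ℤ, Wt q x y z p.1 p.2) + ∑' p : ℤ × ℤ, Wt q x z y p.1 p.2 := by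
  have hw1 : (-(y * z / x ^ 2)) ≠ 0 := by
    simp only [ne_eq, neg_eq_zero, div_eq_zero_iff, mul_eq_zero, pow_eq_zero_iff]
    push_neg
    exact ⟨⟨hy, hz⟩, pow_ne_zero _ hx⟩
  have hw2 : (-(y / z) ^ 3) ≠ 0 := by
    simp only [ne_eq, neg_eq_zero, pow_eq_zero_iff]
    exact fun hcon => absurd (div_eq_zero_iff.mp (by simpa using hcon))
      (by push_neg; exact ⟨hy, hz⟩)
  have hw3 : (-(z / y) ^ 3) ≠ 0 := by
    simp only [ne_eq, neg_eq_zero, pow_eq_zero_iff]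
    exact fun hcon => absurd (div_eq_zero_iff.mp (by simpa using hcon))
      (by push_neg; exact ⟨hz, hy⟩)
  -- summability of the theta terms
  have hT : Summable (fun k : ℤ => ‖(-1 : ℂ) ^ k * (y * z / x ^ 2) ^ k * q ^ (k * (k - 1) / 2)‖) := by
    apply (summable_theta_term hw1 hq).congr
    intro k
    rw [show -(y * z / x ^ 2) = (-1) * (y * z / x ^ 2) from (neg_one_mul _).symm, mul_zpow,
      mul_assoc]
  -- summability of the f terms
  have hG : Summable (fun i : ℤ => ‖(-1 : ℂ) ^ i * q ^ (i * (3 * i - 1) / 2) *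
      (y ^ (3 * i) * z ^ (1 - 3 * i) + y ^ (1 - 3 * i) * z ^ (3 * i))‖) := by
    have hg1 : Summable (fun i : ℤ =>
        ‖z‖ * ‖(-(y / z) ^ 3) ^ i * q ^ (i * (3 * i - 1) / 2)‖) :=
      (summable_f_term hw2 hq).mul_left _
    have hg2 : Summable (fun i : ℤ =>
        ‖y‖ * ‖(-(z / y) ^ 3) ^ i * q ^ (i * (3 * i - 1) / 2)‖) :=
      (summable_f_term hw3 hq).mul_left _
    apply Summable.of_nonneg_of_le (fun _ => norm_nonneg _) _ (hg1.add hg2)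
    intro i
    have key : (-1 : ℂ) ^ i * q ^ (i * (3 * i - 1) / 2) *
        (y ^ (3 * i) * z ^ (1 - 3 * i) + y ^ (1 - 3 * i) * z ^ (3 * i)) =
        z * ((-(y / z) ^ 3) ^ i * q ^ (i * (3 * i - 1) / 2)) +
        y * ((-(z / y) ^ 3) ^ i * q ^ (i * (3 * i - 1) / 2)) := by
      have a1 : (-(y / z) ^ 3) ^ i = (-1) ^ i * (y ^ (3 * i) * (z ^ (3 * i))⁻¹) := by
        rw [show -((y / z) ^ 3) = (-1) * (y ^ 3 * (z ^ 3)⁻¹) by rw [div_pow]; ring, mul_zpow,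
          mul_zpow, inv_zpow, ← zpow_natCast y 3, ← zpow_natCast z 3, ← zpow_mul, ← zpow_mul]
        norm_num
      have a2 : (-(z / y) ^ 3) ^ i = (-1) ^ i * (z ^ (3 * i) * (y ^ (3 * i))⁻¹) := by
        rw [show -((z / y) ^ 3) = (-1) * (z ^ 3 * (y ^ 3)⁻¹) by rw [div_pow]; ring, mul_zpow,
          mul_zpow, inv_zpow, ← zpow_natCast z 3, ← zpow_natCast y 3, ← zpow_mul, ← zpow_mul]
        norm_num
      have a3 : z ^ (1 - 3 * i) = z * (z ^ (3 * i))⁻¹ := by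
        rw [zpow_sub₀ hz 1 (3 * i), zpow_one, div_eq_mul_inv]
      have a4 : y ^ (1 - 3 * i) = y * (y ^ (3 * i))⁻¹ := by
        rw [zpow_sub₀ hy 1 (3 * i), zpow_one, div_eq_mul_inv]
      rw [a1, a2, a3, a4]
      ring
    rw [key]
    calc ‖z * ((-(y / z) ^ 3) ^ i * q ^ (i * (3 * i - 1) / 2)) +
          y * ((-(z / y) ^ 3) ^ i * q ^ (i * (3 * i - 1) / 2))‖
        ≤ ‖z * ((-(y / z) ^ 3) ^ i * q ^ (i * (3 * i - 1) / 2))‖ +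
          ‖y * ((-(z / y) ^ 3) ^ i * q ^ (i * (3 * i - 1) / 2))‖ := norm_add_le _ _
      _ = ‖z‖ * ‖(-(y / z) ^ 3) ^ i * q ^ (i * (3 * i - 1) / 2)‖ +
          ‖y‖ * ‖(-(z / y) ^ 3) ^ i * q ^ (i * (3 * i - 1) / 2)‖ := by rw [norm_mul z _, norm_mul y _]
  calc x ^ 2 * theta q (y * z / x ^ 2) * fdef q y z
      = x ^ 2 * ((∑' k : ℤ, (-1 : ℂ) ^ k * (y * z / x ^ 2) ^ k * q ^ (k * (k - 1) / 2)) *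
        ∑' i : ℤ, (-1 : ℂ) ^ i * q ^ (i * (3 * i - 1) / 2) *
          (y ^ (3 * i) * z ^ (1 - 3 * i) + y ^ (1 - 3 * i) * z ^ (3 * i))) := by
        rw [theta, fdef]; ring
    _ = x ^ 2 * ∑' p : ℤ × ℤ, ((-1 : ℂ) ^ p.1 * (y * z / x ^ 2) ^ p.1 * q ^ (p.1 * (p.1 - 1) / 2) *
        ((-1 : ℂ) ^ p.2 * q ^ (p.2 * (3 * p.2 - 1) / 2) *
          (y ^ (3 * p.2) * z ^ (1 - 3 * p.2) + y ^ (1 - 3 * p.2) * z ^ (3 * p.2)))) := by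
        rw [tsum_mul_tsum_of_summable_norm hT hG]
    _ = ∑' p : ℤ × ℤ, x ^ 2 * ((-1 : ℂ) ^ p.1 * (y * z / x ^ 2) ^ p.1 * q ^ (p.1 * (p.1 - 1) / 2) *
        ((-1 : ℂ) ^ p.2 * q ^ (p.2 * (3 * p.2 - 1) / 2) *
          (y ^ (3 * p.2) * z ^ (1 - 3 * p.2) + y ^ (1 - 3 * p.2) * z ^ (3 * p.2)))) := by
        rw [tsum_mul_left]
    _ = ∑' p : ℤ × ℤ, (Wt q x y z p.1 p.2 + Wt q x z y p.1 p.2) :=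
        tsum_congr fun p => expand_term hx hy hz p.1 p.2
    _ = (∑' p : ℤ × ℤ, Wt q x y z p.1 p.2) + ∑' p : ℤ × ℤ, Wt q x z y p.1 p.2 :=
        Summable.tsum_add ((summable_norm_Wt hq hx hy hz).of_norm) ((summable_norm_Wt hq hx hz hy).of_norm)
theorem functional_equation (q z₁ z₂ z₃ : ℂ) (hq : ‖q‖ < 1)
    (h₁ : z₁ ≠ 0) (h₂ : z₂ ≠ 0) (h₃ : z₃ ≠ 0) :
    z₁ ^ 2 * theta q (z₂ * z₃ / z₁ ^ 2) * fdef q z₂ z₃ +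
      z₂ ^ 2 * theta q (z₃ * z₁ / z₂ ^ 2) * fdef q z₃ z₁ +
      z₃ ^ 2 * theta q (z₁ * z₂ / z₃ ^ 2) * fdef q z₁ z₂ = 0 := by
  have hb : Summable (fun t : Fin 6 × ℤ × ℤ => ‖bigF q z₁ z₂ z₃ t‖) := by
    apply (summable_prod_of_nonneg (fun _ => norm_nonneg _)).2
    constructor
    · intro s
      fin_cases s <;>
        first
          | exact (summable_norm_Wt hq h₁ h₂ h₃).congr (fun p => rfl)
          | exact (summable_norm_Wt hq h₁ h₃ h₂).congr (fun p => rfl)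
          | exact (summable_norm_Wt hq h₂ h₃ h₁).congr (fun p => rfl)
          | exact (summable_norm_Wt hq h₂ h₁ h₃).congr (fun p => rfl)
          | exact (summable_norm_Wt hq h₃ h₁ h₂).congr (fun p => rfl)
          | exact (summable_norm_Wt hq h₃ h₂ h₁).congr (fun p => rfl)
    · exact Summable.of_finite
  have hbs : Summable (bigF q z₁ z₂ z₃) := hb.of_norm
  rw [piece hq h₁ h₂ h₃, piece hq h₂ h₃ h₁, piece hq h₃ h₁ h₂]
  have r0 : (∑' p : ℤ × ℤ, Wt q z₁ z₂ z₃ p.1 p.2) = ∑' p : ℤ × ℤ, bigF q z₁ z₂ z₃ (0, p) :=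
    tsum_congr fun p => rfl
  have r1 : (∑' p : ℤ × ℤ, Wt q z₁ z₃ z₂ p.1 p.2) = ∑' p : ℤ × ℤ, bigF q z₁ z₂ z₃ (1, p) :=
    tsum_congr fun p => rfl
  have r2 : (∑' p : ℤ × ℤ, Wt q z₂ z₃ z₁ p.1 p.2) = ∑' p : ℤ × ℤ, bigF q z₁ z₂ z₃ (2, p) :=
    tsum_congr fun p => rfl
  have r3 : (∑' p : ℤ × ℤ, Wt q z₂ z₁ z₃ p.1 p.2) = ∑' p : ℤ × ℤ, bigF q z₁ z₂ z₃ (3, p) :=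
    tsum_congr fun p => rfl
  have r4 : (∑' p : ℤ × ℤ, Wt q z₃ z₁ z₂ p.1 p.2) = ∑' p : ℤ × ℤ, bigF q z₁ z₂ z₃ (4, p) :=
    tsum_congr fun p => rfl
  have r5 : (∑' p : ℤ × ℤ, Wt q z₃ z₂ z₁ p.1 p.2) = ∑' p : ℤ × ℤ, bigF q z₁ z₂ z₃ (5, p) :=
    tsum_congr fun p => rfl
  rw [r0, r1, r2, r3, r4, r5]
  have hfin : ∑' t, bigF q z₁ z₂ z₃ t = ∑ s : Fin 6, ∑' p : ℤ × ℤ, bigF q z₁ z₂ z₃ (s, p) := by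
    rw [Summable.tsum_prod hbs, tsum_fintype]
  have := tsum_bigF_zero q z₁ z₂ z₃
  rw [hfin, Fin.sum_univ_six] at this
  linear_combination this
end
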